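/- Let G be a contracting self-similar subgroup of Aut(T) and let H be a finite subset of G. Then the set of all elements of the form (((h₁|_{x₁}·h₂)|_{x₂}·h₃)|_{x₃}·…·h_n)|_{x_n}, over all n ≥ 1, h₁,…,h_n ∈ H and x₁,…,x_n ∈ X, is finite; likewise the set of all elements of the form (h_n·…·(h₃·(h₂·h₁|_{x₁})|_{x₂})|_{x₃}…)|_{x_n} is finite. -/

import Mathlib

open List

/-- Vertices of the rooted `d`-ary tree `T`: finite words over the alphabet
`X = Fin d`. -/
abbrev Vertex (d : ℕ) := List (Fin d)

/-- `g` is an automorphism of the rooted `d`-ary tree: a bijection of the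
vertex set `X*` preserving word length and the prefix relation. -/
def IsTreeAut {d : ℕ} (g : Equiv.Perm (Vertex d)) : Prop :=
  (∀ v : Vertex d, (g v).length = v.length) ∧
    ∀ v w : Vertex d, g v <+: g (v ++ w)

theorem IsTreeAut.prefix_mono {d : ℕ} {g : Equiv.Perm (Vertex d)} (hg : IsTreeAut g)
    {u u' : Vertex d} (h : u <+: u') : g u <+: g u' := by
  obtain ⟨t, rfl⟩ := h
  exact hg.2 u t

/-- The automorphism group `Aut(T)` of the rooted `d`-ary tree, as a subgroup
of the group of permutations of the vertex set. -/
def treeAut (d : ℕ) : Subgroup (Equiv.Perm (Vertex d)) where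
  carrier := {g | IsTreeAut g}
  one_mem' := ⟨fun _ => rfl, fun v w => ⟨w, rfl⟩⟩
  mul_mem' := by
    intro g h hg hh
    obtain ⟨hg1, hg2⟩ := hg
    obtain ⟨hh1, hh2⟩ := hh
    refine ⟨fun v => ?_, fun v w => ?_⟩
    · simp [Equiv.Perm.mul_apply, hg1, hh1]
    · obtain ⟨t, ht⟩ := hh2 v w
      simp only [Equiv.Perm.mul_apply]
      rw [← ht]
      exact hg2 (h v) t
  inv_mem' := by
    intro g hgmem
    obtain ⟨hg1, hg2⟩ := hgmem
    have hg : IsTreeAut g := ⟨hg1, hg2⟩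
    have hlen' : ∀ v : Vertex d, (g⁻¹ v).length = v.length := by
      intro v
      conv_rhs => rw [← (show ∀ x : Vertex d, g (g⁻¹ x) = x from fun x => Equiv.apply_symm_apply g x) v]
      rw [hg1]
    refine ⟨hlen', fun v w => ?_⟩
    have hle : (g⁻¹ v).length ≤ (g⁻¹ (v ++ w)).length := by
      have h1 := hlen' v
      have h2 := hlen' (v ++ w)
      rw [List.length_append] at h2
      omega
    have htp : (g⁻¹ (v ++ w)).take (g⁻¹ v).length <+: g⁻¹ (v ++ w) :=
      List.take_prefix _ _
    have hgtp : g ((g⁻¹ (v ++ w)).take (g⁻¹ v).length) <+: v ++ w := by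
      have := hg.prefix_mono htp
      rwa [(show ∀ x : Vertex d, g (g⁻¹ x) = x from fun x => Equiv.apply_symm_apply g x)] at this
    have hlen_tp : (g ((g⁻¹ (v ++ w)).take (g⁻¹ v).length)).length = v.length := by
      rw [hg1, List.length_take, min_eq_left hle, hlen' v]
    have hveq : g ((g⁻¹ (v ++ w)).take (g⁻¹ v).length) = v := by
      have h1 := List.prefix_iff_eq_take.mp hgtp
      have h2 := List.prefix_iff_eq_take.mp (List.prefix_append v w)
      rw [h1, hlen_tp]
      exact h2.symm
    have hkey : (g⁻¹ (v ++ w)).take (g⁻¹ v).length = g⁻¹ v := by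
      apply g.injective
      rw [hveq, (show ∀ x : Vertex d, g (g⁻¹ x) = x from fun x => Equiv.apply_symm_apply g x)]
    rw [← hkey]
    exact htp

open scoped Classical in
/-- The state (section) `g|_v` of `g` at the vertex `v` : the unique
automorphism satisfying `g (v ++ w) = g v ++ (g|_v) w` for all `w`. -/
noncomputable def state {d : ℕ} (g : Equiv.Perm (Vertex d)) (v : Vertex d) :
    Equiv.Perm (Vertex d) :=
  if h : Function.Bijective (fun w : Vertex d => (g (v ++ w)).drop v.length) then
    Equiv.ofBijective _ h
  else 1

/-- A finite-state automorphism: one having finitely many states.  The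
finite-state automorphisms form the group `F(X)`. -/
def FiniteState {d : ℕ} (g : Equiv.Perm (Vertex d)) : Prop :=
  (Set.range fun v : Vertex d => state g v).Finite

/-- The cardinality of the orbit `Orb_a(v)` of the vertex `v` under the cyclic
group generated by `a`. -/
noncomputable def orbitCard {d : ℕ} (a : Equiv.Perm (Vertex d)) (v : Vertex d) : ℕ :=
  Nat.card (Set.range fun n : ℤ => (a ^ n) v)

/-- The orbit-signalizer `OS(a) = { a^m|_v : v ∈ X^*, m = |Orb_a(v)| }`. -/
noncomputable def OS {d : ℕ} (a : Equiv.Perm (Vertex d)) : Set (Equiv.Perm (Vertex d)) :=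
  {s | ∃ v : Vertex d, s = state (a ^ orbitCard a v) v}

/-- `a` has finite orbit-signalizer. -/
def FiniteOS {d : ℕ} (a : Equiv.Perm (Vertex d)) : Prop := (OS a).Finite

/-- A self-similar (state-closed) subgroup. -/
def SelfSimilar {d : ℕ} (G : Subgroup (Equiv.Perm (Vertex d))) : Prop :=
  ∀ g ∈ G, ∀ v : Vertex d, state g v ∈ G

/-- A contracting group: there is a finite set `N ⊆ G` such that every
`g ∈ G` has all its states in `N` from some level on. -/
def ContractingGroup {d : ℕ} (G : Subgroup (Equiv.Perm (Vertex d))) : Prop :=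
  ∃ N : Set (Equiv.Perm (Vertex d)), N.Finite ∧ N ⊆ (G : Set (Equiv.Perm (Vertex d))) ∧
    ∀ g ∈ G, ∃ n : ℕ, ∀ v : Vertex d, n ≤ v.length → state g v ∈ N

/-- A contracting automorphism: the self-similar group generated by all of its
states is contracting. -/
def ContractingAut {d : ℕ} (f : Equiv.Perm (Vertex d)) : Prop :=
  ContractingGroup (Subgroup.closure (Set.range fun v : Vertex d => state f v))

/-- The activity sequence `θ_k(g)`: the number of vertices `v` of level `k`
whose state `g|_v` acts nontrivially on the first level `X`. -/
noncomputable def theta {d : ℕ} (g : Equiv.Perm (Vertex d)) (k : ℕ) : ℕ :=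
  Nat.card {v : Vertex d // v.length = k ∧ ∃ x : Fin d, state g v [x] ≠ [x]}

/-- A bounded automorphism: a finite-state automorphism with bounded activity
sequence.  The bounded automorphisms form the group `Pol(0)`. -/
def BoundedAut {d : ℕ} (g : Equiv.Perm (Vertex d)) : Prop :=
  FiniteState g ∧ ∃ C : ℕ, ∀ k : ℕ, theta g k ≤ C

/-- A polynomial automorphism (an element of `Pol(∞)`): a finite-state
automorphism whose activity sequence is polynomially bounded. -/
def PolyAut {d : ℕ} (g : Equiv.Perm (Vertex d)) : Prop :=
  FiniteState g ∧ ∃ p : Polynomial ℕ, ∀ k : ℕ, theta g k ≤ p.eval k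

/-- A finitary automorphism (an element of `Pol(-1)`): all states at some
level are trivial. -/
def Finitary {d : ℕ} (g : Equiv.Perm (Vertex d)) : Prop :=
  ∃ k : ℕ, ∀ v : Vertex d, v.length = k → state g v = 1

/-- A functionally recursive automorphism: a member of some finitely generated
self-similar subgroup of `Aut(T)`.  These form the group `FR(X)`. -/
def FunctionallyRecursive {d : ℕ} (g : Equiv.Perm (Vertex d)) : Prop :=
  ∃ G : Subgroup (Equiv.Perm (Vertex d)), G ≤ treeAut d ∧ SelfSimilar G ∧
    (∃ S : Set (Equiv.Perm (Vertex d)), S.Finite ∧ G = Subgroup.closure S) ∧ g ∈ G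
/-- Left-nested products: `leftNest h₁ [(x₁,h₂),…,(x_{n-1},h_n)] x_n` is the
element `(((h₁|_{x₁}·h₂)|_{x₂}·h₃)|_{x₃}·…·h_n)|_{x_n}` (written here in the
left-action convention, so the paper's product `g·h` is `h * g`). -/
noncomputable def leftNest {d : ℕ} (h : Equiv.Perm (Vertex d)) :
    List (Fin d × Equiv.Perm (Vertex d)) → Fin d → Equiv.Perm (Vertex d)
  | [], x => state h ([x] : Vertex d)
  | (x, h') :: l, y => leftNest (h' * state h ([x] : Vertex d)) l y

/-- Right-nested products: `rightNest h₁ [(x₁,h₂),…,(x_{n-1},h_n)] x_n` is the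
element `(h_n·…·(h₃·(h₂·h₁|_{x₁})|_{x₂})|_{x₃}…)|_{x_n}` (in the left-action
convention, the paper's product `g·h` being `h * g`). -/
noncomputable def rightNest {d : ℕ} (h : Equiv.Perm (Vertex d)) :
    List (Fin d × Equiv.Perm (Vertex d)) → Fin d → Equiv.Perm (Vertex d)
  | [], x => state h ([x] : Vertex d)
  | (x, h') :: l, y => rightNest (state h ([x] : Vertex d) * h') l y


section Aux

variable {d : ℕ}

local notation "Aut" => Equiv.Perm (Vertex d)

lemma mem_treeAut_iff {g : Aut} : g ∈ treeAut d ↔ IsTreeAut g := Iff.rfl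

lemma lenp {g : Aut} (hg : g ∈ treeAut d) (v : Vertex d) : (g v).length = v.length :=
  (mem_treeAut_iff.mp hg).1 v

lemma key {g : Aut} (hg : g ∈ treeAut d) (v u : Vertex d) :
    g (v ++ u) = g v ++ (g (v ++ u)).drop v.length := by
  have hpre : g v <+: g (v ++ u) := (mem_treeAut_iff.mp hg).2 v u
  calc g (v ++ u) = (g (v ++ u)).take (g v).length ++ (g (v ++ u)).drop (g v).length :=
        (List.take_append_drop _ _).symm
    _ = g v ++ (g (v ++ u)).drop v.length := by
        rw [← List.prefix_iff_eq_take.mp hpre, lenp hg]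

lemma state_bij {g : Aut} (hg : g ∈ treeAut d) (v : Vertex d) :
    Function.Bijective (fun w : Vertex d => (g (v ++ w)).drop v.length) := by
  constructor
  · intro w w' h
    have h0 : (g (v ++ w)).drop v.length = (g (v ++ w')).drop v.length := h
    have h2 : g (v ++ w) = g (v ++ w') := by rw [key hg v w, key hg v w', h0]
    exact append_cancel_left (g.injective h2)
  · intro t
    have hginv : g⁻¹ ∈ treeAut d := (treeAut d).inv_mem hg
    have hpre : g⁻¹ (g v) <+: g⁻¹ (g v ++ t) :=
      (mem_treeAut_iff.mp hginv).prefix_mono ⟨t, rfl⟩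
    rw [(show g⁻¹ (g v) = v from Equiv.symm_apply_apply g v)] at hpre
    obtain ⟨w, hw⟩ := hpre
    refine ⟨w, ?_⟩
    simp only
    rw [hw, (show ∀ x : Vertex d, g (g⁻¹ x) = x from fun x => Equiv.apply_symm_apply g x), ← lenp hg v, List.drop_left]

lemma state_apply {g : Aut} (hg : g ∈ treeAut d) (v w : Vertex d) :
    state g v w = (g (v ++ w)).drop v.length := by
  unfold state
  rw [dif_pos (state_bij hg v)]
  rfl

lemma state_spec {g : Aut} (hg : g ∈ treeAut d) (v w : Vertex d) :
    g (v ++ w) = g v ++ state g v w := by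
  rw [state_apply hg]; exact key hg v w

lemma state_unique {g : Aut} (hg : g ∈ treeAut d) (v : Vertex d) (e : Aut)
    (he : ∀ w, g (v ++ w) = g v ++ e w) : state g v = e := by
  apply Equiv.ext
  intro w
  have h2 : g v ++ state g v w = g v ++ e w := by rw [← state_spec hg, he]
  exact append_cancel_left h2

lemma state_mem {g : Aut} (hg : g ∈ treeAut d) (v : Vertex d) : state g v ∈ treeAut d := by
  refine mem_treeAut_iff.mpr ⟨fun w => ?_, fun w u => ?_⟩
  · rw [state_apply hg, List.length_drop, lenp hg, List.length_append]
    omega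
  · have h1 := state_spec hg v (w ++ u)
    rw [← List.append_assoc] at h1
    have h2 := state_spec hg v w
    have hpre : g (v ++ w) <+: g ((v ++ w) ++ u) := (mem_treeAut_iff.mp hg).2 _ u
    rw [h1, h2] at hpre
    exact (prefix_append_right_inj _).mp hpre

lemma state_mul {g f : Aut} (hg : g ∈ treeAut d) (hf : f ∈ treeAut d) (v : Vertex d) :
    state (g * f) v = state g (f v) * state f v := by
  apply state_unique ((treeAut d).mul_mem hg hf)
  intro w
  simp only [Equiv.Perm.mul_apply]
  rw [state_spec hf v w, state_spec hg (f v)]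

lemma state_state {g : Aut} (hg : g ∈ treeAut d) (v w : Vertex d) :
    state (state g v) w = state g (v ++ w) := by
  apply state_unique (state_mem hg v)
  intro u
  have : g v ++ (state g v) (w ++ u) = g v ++ ((state g v) w ++ state g (v ++ w) u) := by
    rw [← state_spec hg v (w ++ u), ← List.append_assoc (g v), ← state_spec hg v w,
      ← state_spec hg (v ++ w) u, List.append_assoc]
  exact append_cancel_left this

lemma state_one (v : Vertex d) : state (1 : Aut) v = 1 := by
  apply state_unique ((treeAut d).one_mem)
  intro w
  rfl

lemma state_nil {g : Aut} (hg : g ∈ treeAut d) : state g ([] : Vertex d) = g := by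
  have hnil : g ([] : Vertex d) = [] := by
    have := lenp hg ([] : Vertex d)
    simpa using List.length_eq_zero_iff.mp (by simpa using this)
  apply state_unique hg
  intro w
  simp [hnil]

lemma state_inv {g : Aut} (hg : g ∈ treeAut d) (v : Vertex d) :
    (state g v)⁻¹ = state g⁻¹ (g v) := by
  have h := state_mul ((treeAut d).inv_mem hg) hg v
  have h1 : g⁻¹ * g = 1 := by group
  rw [h1, state_one] at h
  exact (eq_inv_of_mul_eq_one_left h.symm).symm

lemma states_finite {G : Subgroup Aut} {N : Set Aut}
    (hNfin : N.Finite)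
    (hcon : ∀ g ∈ G, ∃ n : ℕ, ∀ v : Vertex d, n ≤ v.length → state g v ∈ N)
    {g : Aut} (hg : g ∈ G) : {e | ∃ v : Vertex d, e = state g v}.Finite := by
  obtain ⟨n, hn⟩ := hcon g hg
  apply Set.Finite.subset (((List.finite_length_lt (Fin d) n).image (state g)).union hNfin)
  rintro e ⟨v, rfl⟩
  rcases lt_or_ge v.length n with h | h
  · exact Or.inl ⟨v, h, rfl⟩
  · exact Or.inr (hn v h)

lemma uniform_level {G : Subgroup Aut} {N : Set Aut}
    (hcon : ∀ g ∈ G, ∃ n : ℕ, ∀ v : Vertex d, n ≤ v.length → state g v ∈ N)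
    {S : Set Aut} (hS : S.Finite) (hSG : S ⊆ (G : Set Aut)) :
    ∃ n : ℕ, ∀ g ∈ S, ∀ v : Vertex d, n ≤ v.length → state g v ∈ N := by
  classical
  have hch : ∀ g : hS.toFinset, ∃ n : ℕ, ∀ v : Vertex d, n ≤ v.length →
      state (g : Aut) v ∈ N :=
    fun g => hcon g (hSG (hS.mem_toFinset.mp g.2))
  choose f hf using hch
  refine ⟨Finset.univ.sup f, fun g hg v hv => ?_⟩
  have hg' : g ∈ hS.toFinset := hS.mem_toFinset.mpr hg
  exact hf ⟨g, hg'⟩ v (le_trans (Finset.le_sup (Finset.mem_univ (⟨g, hg'⟩ : hS.toFinset))) hv)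

/-- Products of at most `m` elements of `W`. -/
def prodsLe (W : Set (Equiv.Perm (Vertex d))) (m : ℕ) : Set (Equiv.Perm (Vertex d)) :=
  {g | ∃ l : List (Equiv.Perm (Vertex d)), (∀ a ∈ l, a ∈ W) ∧ l.length ≤ m ∧ g = l.prod}

lemma prodsLe_finite {W : Set Aut} (hW : W.Finite) : ∀ m : ℕ, (prodsLe W m).Finite := by
  intro m
  induction m with
  | zero =>
    apply Set.Finite.subset (Set.finite_singleton 1)
    rintro g ⟨l, hl, hlen, rfl⟩
    have : l = [] := List.length_eq_zero_iff.mp (Nat.le_zero.mp hlen)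
    simp [this]
  | succ m ih =>
    apply Set.Finite.subset ((Set.Finite.image2 (· * ·) hW ih).union ih)
    rintro g ⟨l, hl, hlen, rfl⟩
    cases l with
    | nil => exact Or.inr ⟨[], by simp, by simp, rfl⟩
    | cons a t =>
      refine Or.inl ⟨a, hl a (by simp), t.prod, ⟨t, fun b hb => hl b (by simp [hb]),
        by simpa using hlen, rfl⟩, by simp⟩

/-- The invariant maintained along left-nested products. -/
def InvP (H W : Set (Equiv.Perm (Vertex d))) (k₀ : ℕ) (g : Equiv.Perm (Vertex d)) : Prop :=
  ∃ (h : Equiv.Perm (Vertex d)) (R Pl : List (Equiv.Perm (Vertex d))) (v : Vertex d),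
    h ∈ H ∧ (∀ a ∈ R, a ∈ W) ∧ (∀ a ∈ Pl, a ∈ W) ∧
    R.length = v.length ∧ v.length < k₀ ∧ Pl.length ≤ 2 * k₀ ∧
    g = h * (R.prod * state Pl.prod v)

lemma leftNest_finite (d : ℕ) (G : Subgroup (Equiv.Perm (Vertex d)))
    (hG : G ≤ treeAut d) (hss : SelfSimilar G) (hc : ContractingGroup G)
    (H : Set (Equiv.Perm (Vertex d))) (hH : H.Finite) (hHG : H ⊆ (G : Set _)) :
    {g : Equiv.Perm (Vertex d) | ∃ h ∈ H, ∃ l : List (Fin d × Equiv.Perm (Vertex d)),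
        (∀ p ∈ l, p.2 ∈ H) ∧ ∃ x : Fin d, g = leftNest h l x}.Finite := by
  classical
  obtain ⟨N, hNfin, hNG, hcon⟩ := hc
  set W : Set (Equiv.Perm (Vertex d)) :=
    {1} ∪ ⋃ g ∈ (N ∪ H), {e | ∃ v : Vertex d, e = state g v} with hWdef
  have hNHG : (N ∪ H) ⊆ (G : Set (Equiv.Perm (Vertex d))) := Set.union_subset hNG hHG
  have hWfin : W.Finite :=
    (Set.finite_singleton 1).union
      (Set.Finite.biUnion (hNfin.union hH) fun g hg => states_finite hNfin hcon (hNHG hg))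
  have hWG : W ⊆ (G : Set (Equiv.Perm (Vertex d))) := by
    rintro w (rfl | hw)
    · exact G.one_mem
    · simp only [Set.mem_iUnion] at hw
      obtain ⟨g, hg, v, rfl⟩ := hw
      exact hss g (hNHG hg) v
  have hWstate : ∀ w ∈ W, ∀ u : Vertex d, state w u ∈ W := by
    rintro w (rfl | hw) u
    · rw [state_one]; exact Or.inl rfl
    · simp only [Set.mem_iUnion] at hw
      obtain ⟨g, hg, v, rfl⟩ := hw
      exact Or.inr (Set.mem_biUnion hg ⟨v ++ u, state_state (hG (hNHG hg)) v u⟩)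
  have hmemW : ∀ g ∈ N ∪ H, g ∈ W := fun g hg =>
    Or.inr (Set.mem_biUnion hg ⟨[], (state_nil (hG (hNHG hg))).symm⟩)
  have hWWfin : (Set.image2 (· * ·) W W).Finite := Set.Finite.image2 _ hWfin hWfin
  have hWWG : Set.image2 (· * ·) W W ⊆ (G : Set (Equiv.Perm (Vertex d))) := by
    rintro a ⟨b, hb, c, hc, rfl⟩
    exact G.mul_mem (hWG hb) (hWG hc)
  obtain ⟨n₀, hn₀⟩ := uniform_level hcon hWWfin hWWG
  set k₀ : ℕ := max 1 n₀ with hk₀def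
  have hk₀pos : 1 ≤ k₀ := le_max_left _ _
  have hk₀ : ∀ w ∈ W, ∀ w' ∈ W, ∀ v : Vertex d, k₀ ≤ v.length → state (w * w') v ∈ N :=
    fun w hw w' hw' v hv =>
      hn₀ _ (Set.mem_image2_of_mem hw hw') v (le_trans (le_max_right _ _) hv)
  have prodG : ∀ {l : List (Equiv.Perm (Vertex d))}, (∀ a ∈ l, a ∈ W) → l.prod ∈ G :=
    fun {l} hl => G.list_prod_mem fun a ha => hWG (hl a ha)
  -- states of products of W-elements are again products of W-elements of the same length
  have stepQ : ∀ l : List (Equiv.Perm (Vertex d)), (∀ a ∈ l, a ∈ W) → ∀ v : Vertex d,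
      ∃ l' : List (Equiv.Perm (Vertex d)),
        (∀ a ∈ l', a ∈ W) ∧ l'.length = l.length ∧ state l.prod v = l'.prod := by
    intro l
    induction l with
    | nil => exact fun _ v => ⟨[], by simp, by simp, by simp [state_one]⟩
    | cons a t ih =>
      intro hl v
      have haW := hl a (by simp)
      have htW : ∀ b ∈ t, b ∈ W := fun b hb => hl b (by simp [hb])
      obtain ⟨l', hl', hlen, hst⟩ := ih htW v
      refine ⟨state a (t.prod v) :: l', ?_, by simp [hlen], ?_⟩
      · rintro b hb
        rcases List.mem_cons.mp hb with rfl | hb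
        · exact hWstate a haW _
        · exact hl' b hb
      · rw [List.prod_cons, state_mul (hG (hWG haW)) (hG (prodG htW)) v, hst, List.prod_cons]
  -- deep states of products of W-elements contract to products of about half the length
  have contractP : ∀ (n : ℕ) (l : List (Equiv.Perm (Vertex d))), l.length ≤ n →
      (∀ a ∈ l, a ∈ W) → ∀ v : Vertex d, k₀ ≤ v.length →
      ∃ l' : List (Equiv.Perm (Vertex d)),
        (∀ a ∈ l', a ∈ W) ∧ 2 * l'.length ≤ l.length + 1 ∧ state l.prod v = l'.prod := by
    intro n
    induction n with
    | zero =>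
      intro l hlen hl v hv
      have : l = [] := List.length_eq_zero_iff.mp (Nat.le_zero.mp hlen)
      subst this
      exact ⟨[], by simp, by simp, by simp [state_one]⟩
    | succ n ih =>
      intro l hlen hl v hv
      match l with
      | [] => exact ⟨[], by simp, by simp, by simp [state_one]⟩
      | [a] =>
        refine ⟨[state a v], ?_, by simp, by simp⟩
        rintro b hb
        rcases List.mem_cons.mp hb with rfl | hb
        · exact hWstate a (hl a (by simp)) v
        · simp at hb
      | a :: b :: t =>
        have haW := hl a (by simp)
        have hbW := hl b (by simp)
        have htW : ∀ c ∈ t, c ∈ W := fun c hc => hl c (by simp [hc])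
        have htlen : t.length ≤ n := by simp at hlen; omega
        obtain ⟨l', hl', hlen', hst⟩ := ih t htlen htW v hv
        have hprodlen : (t.prod v).length = v.length := lenp (hG (prodG htW)) v
        refine ⟨state (a * b) (t.prod v) :: l', ?_, ?_, ?_⟩
        · rintro c hc
          rcases List.mem_cons.mp hc with rfl | hc
          · exact hmemW _ (Or.inl (hk₀ a haW b hbW _ (by rw [hprodlen]; exact hv)))
          · exact hl' c hc
        · simp only [List.length_cons]
          omega
        · have hprod : (a :: b :: t).prod = (a * b) * t.prod := by
            simp [List.prod_cons, mul_assoc]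
          rw [hprod, state_mul (hG (G.mul_mem (hWG haW) (hWG hbW))) (hG (prodG htW)) v, hst,
            List.prod_cons]
  -- one step of the decomposition
  have decomp : ∀ g, InvP H W k₀ g → ∀ x : Fin d,
      ∃ (R' Pl : List (Equiv.Perm (Vertex d))) (v' : Vertex d),
        (∀ a ∈ R', a ∈ W) ∧ (∀ a ∈ Pl, a ∈ W) ∧ R'.length = v'.length ∧
        v'.length ≤ k₀ ∧ Pl.length ≤ 2 * k₀ ∧
        state g [x] = R'.prod * state Pl.prod v' := by
    rintro g ⟨h, R, Pl, v, hh, hR, hPl, hRv, hvk, hPlen, rfl⟩ x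
    have hhG : h ∈ G := hHG hh
    have hRG : R.prod ∈ G := prodG hR
    have hPG : Pl.prod ∈ G := prodG hPl
    have hsPG : state Pl.prod v ∈ G := hss _ hPG v
    have hbG : R.prod * state Pl.prod v ∈ G := G.mul_mem hRG hsPG
    have e1 : state (h * (R.prod * state Pl.prod v)) [x] =
        state h ((R.prod * state Pl.prod v) [x]) * state (R.prod * state Pl.prod v) [x] :=
      state_mul (hG hhG) (hG hbG) [x]
    have e2 : state (R.prod * state Pl.prod v) [x] =
        state R.prod ((state Pl.prod v) [x]) * state (state Pl.prod v) [x] :=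
      state_mul (hG hRG) (hG hsPG) [x]
    have e3 : state (state Pl.prod v) [x] = state Pl.prod (v ++ [x]) :=
      state_state (hG hPG) v [x]
    obtain ⟨R₁, hR₁, hR₁len, hR₁eq⟩ := stepQ R hR ((state Pl.prod v) [x])
    refine ⟨state h ((R.prod * state Pl.prod v) [x]) :: R₁, Pl, v ++ [x], ?_, hPl, ?_, ?_,
      hPlen, ?_⟩
    · rintro a ha
      rcases List.mem_cons.mp ha with rfl | ha
      · exact hWstate h (hmemW h (Or.inr hh)) _
      · exact hR₁ a ha
    · simp [hR₁len, hRv]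
    · simp only [List.length_append, List.length_cons, List.length_nil]
      omega
    · rw [e1, e2, e3, hR₁eq, List.prod_cons, mul_assoc]
  -- the invariant is preserved
  have step : ∀ g, InvP H W k₀ g → ∀ h' ∈ H, ∀ x : Fin d,
      InvP H W k₀ (h' * state g [x]) := by
    intro g hg h' hh' x
    obtain ⟨R', Pl, v', hR', hPl, hRv', hv'le, hPlen, heq⟩ := decomp g hg x
    rcases lt_or_eq_of_le hv'le with hlt | heq2
    · exact ⟨h', R', Pl, v', hh', hR', hPl, hRv', hlt, hPlen, by rw [heq]⟩
    · obtain ⟨P₁, hP₁, hP₁len, hstP⟩ :=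
        contractP Pl.length Pl le_rfl hPl v' (le_of_eq heq2.symm)
      have hRP : ∀ a ∈ R' ++ P₁, a ∈ W := by
        intro a ha
        rcases List.mem_append.mp ha with h1 | h1
        exacts [hR' a h1, hP₁ a h1]
      refine ⟨h', [], R' ++ P₁, [], hh', by simp, hRP, by simp, hk₀pos, ?_, ?_⟩
      · simp only [List.length_append]
        omega
      · rw [heq, hstP, state_nil (hG (prodG hRP)), List.prod_append]
        simp [mul_assoc]
  -- from the invariant, the next state lies in a fixed finite set
  have fin : ∀ g, InvP H W k₀ g → ∀ x : Fin d, state g [x] ∈ prodsLe W (3 * k₀) := by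
    intro g hg x
    obtain ⟨R', Pl, v', hR', hPl, hRv', hv'le, hPlen, heq⟩ := decomp g hg x
    obtain ⟨l₂, hl₂, hl₂len, hst⟩ := stepQ Pl hPl v'
    refine ⟨R' ++ l₂, ?_, ?_, ?_⟩
    · intro a ha
      rcases List.mem_append.mp ha with h1 | h1
      exacts [hR' a h1, hl₂ a h1]
    · rw [List.length_append, hRv', hl₂len]
      omega
    · rw [heq, hst, List.prod_append]
  have base : ∀ h ∈ H, InvP H W k₀ h := by
    intro h hh
    exact ⟨h, [], [], [], hh, by simp, by simp, rfl, hk₀pos, by simp, by simp [state_one]⟩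
  have master : ∀ (l : List (Fin d × Equiv.Perm (Vertex d))) (g : Equiv.Perm (Vertex d)),
      InvP H W k₀ g → (∀ p ∈ l, p.2 ∈ H) → ∀ x : Fin d,
      leftNest g l x ∈ prodsLe W (3 * k₀) := by
    intro l
    induction l with
    | nil => exact fun g hg _ x => fin g hg x
    | cons p t ih =>
      intro g hg hl x
      obtain ⟨a, h'⟩ := p
      exact ih _ (step g hg h' (hl (a, h') (by simp)) a) (fun q hq => hl q (by simp [hq])) x
  apply Set.Finite.subset (prodsLe_finite hWfin (3 * k₀))
  rintro g ⟨h, hh, l, hl, x, rfl⟩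
  exact master l h (base h hh) hl x

lemma rightNest_inv_eq (H : Set (Equiv.Perm (Vertex d)))
    (hHT : ∀ g ∈ H, g ∈ treeAut d) :
    ∀ l : List (Fin d × Equiv.Perm (Vertex d)), (∀ p ∈ l, p.2 ∈ H) →
    ∀ h, h ∈ treeAut d → ∀ x : Fin d,
    ∃ (l' : List (Fin d × Equiv.Perm (Vertex d))) (x' : Fin d),
      (∀ p ∈ l', p.2 ∈ (fun a : Equiv.Perm (Vertex d) => a⁻¹) '' H) ∧
      (rightNest h l x)⁻¹ = leftNest h⁻¹ l' x' := by
  intro l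
  induction l with
  | nil =>
    intro _ h hh x
    have hx1 : (h [x]).length = 1 := by rw [lenp hh]; rfl
    obtain ⟨y, hy⟩ := List.length_eq_one_iff.mp hx1
    refine ⟨[], y, by simp, ?_⟩
    show (state h [x])⁻¹ = state h⁻¹ [y]
    rw [state_inv hh, hy]
  | cons p t ih =>
    intro hl h hh x
    obtain ⟨a, h'⟩ := p
    have hh' : h' ∈ treeAut d := hHT h' (hl (a, h') (by simp))
    have h0 : state h [a] * h' ∈ treeAut d := (treeAut d).mul_mem (state_mem hh [a]) hh'
    obtain ⟨l', x', hl', heq⟩ := ih (fun q hq => hl q (by simp [hq])) (state h [a] * h') h0 x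
    have ha1 : (h [a]).length = 1 := by rw [lenp hh]; rfl
    obtain ⟨y, hy⟩ := List.length_eq_one_iff.mp ha1
    refine ⟨(y, h'⁻¹) :: l', x', ?_, ?_⟩
    · rintro q hq
      rcases List.mem_cons.mp hq with rfl | hq
      · exact ⟨h', hl (a, h') (by simp), rfl⟩
      · exact hl' q hq
    · show (rightNest (state h [a] * h') t x)⁻¹ = leftNest (h'⁻¹ * state h⁻¹ [y]) l' x'
      rw [heq, mul_inv_rev, state_inv hh, hy]

end Aux

/-- Let `G` be a contracting self-similar subgroup of `Aut(T)`
and `H` a finite subset of `G`.  Then the set of all left-nested products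
`(((h₁|_{x₁}·h₂)|_{x₂}·h₃)|_{x₃}·…·h_n)|_{x_n}` with `h_i ∈ H`, `x_i ∈ X` is
finite, and likewise the set of all right-nested products
`(h_n·…·(h₃·(h₂·h₁|_{x₁})|_{x₂})|_{x₃}…)|_{x_n}` is finite. -/
theorem nested_products_finite
    (d : ℕ) (hd : 2 ≤ d) (G : Subgroup (Equiv.Perm (Vertex d)))
    (hG : G ≤ treeAut d) (hss : SelfSimilar G) (hc : ContractingGroup G)
    (H : Set (Equiv.Perm (Vertex d))) (hH : H.Finite) (hHG : H ⊆ (G : Set _)) :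
    {g : Equiv.Perm (Vertex d) | ∃ h ∈ H, ∃ l : List (Fin d × Equiv.Perm (Vertex d)),
        (∀ p ∈ l, p.2 ∈ H) ∧ ∃ x : Fin d, g = leftNest h l x}.Finite ∧
    {g : Equiv.Perm (Vertex d) | ∃ h ∈ H, ∃ l : List (Fin d × Equiv.Perm (Vertex d)),
        (∀ p ∈ l, p.2 ∈ H) ∧ ∃ x : Fin d, g = rightNest h l x}.Finite := by
  refine ⟨leftNest_finite d G hG hss hc H hH hHG, ?_⟩
  have Hinv : ((fun a : Equiv.Perm (Vertex d) => a⁻¹) '' H).Finite := hH.image _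
  have HinvG : (fun a : Equiv.Perm (Vertex d) => a⁻¹) '' H ⊆ (G : Set _) := by
    rintro a ⟨b, hb, rfl⟩
    exact G.inv_mem (hHG hb)
  have hleft := leftNest_finite d G hG hss hc _ Hinv HinvG
  apply Set.Finite.subset (hleft.image fun a => a⁻¹)
  rintro g ⟨h, hh, l, hl, x, rfl⟩
  obtain ⟨l', x', hl', heq⟩ :=
    rightNest_inv_eq H (fun a ha => hG (hHG ha)) l hl h (hG (hHG hh)) x
  exact ⟨leftNest h⁻¹ l' x', ⟨h⁻¹, ⟨h, hh, rfl⟩, l', hl', x', rfl⟩, by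
    show (leftNest h⁻¹ l' x')⁻¹ = rightNest h l x
    rw [← heq, inv_inv]⟩
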